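/- Let M, N ⊂ Z_d^{2n} be Lagrangian subspaces and K = M ∩ N. Then for stabilizer states |M,ζ⟩ and |N,ι⟩ (determined by cosets ζ + M and ι + N), the squared overlap satisfies |⟨M,ζ|N,ι⟩|^2 = d^{-n}|K| if [ζ,m] = [ι,m] for all m ∈ K, and = 0 otherwise. -/

import Mathlib

noncomputable section

open scoped Classical

/-- The phase space `V = ℤ_d^n × ℤ_d^n ≃ ℤ_d^{2n}` (momentum and position parts). -/
abbrev PhaseSpace (d n : ℕ) := (Fin n → ZMod d) × (Fin n → ZMod d)

/-- The standard symplectic form `[u,v] = uᵀ J v` on `ℤ_d^{2n}`. -/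
def sform {d n : ℕ} (u v : PhaseSpace d n) : ZMod d :=
  ∑ i, (u.1 i * v.2 i - u.2 i * v.1 i)

/-- A Lagrangian (maximally isotropic) subspace of the phase space. -/
def IsLagrangian {d n : ℕ} (M : Submodule (ZMod d) (PhaseSpace d n)) : Prop :=
  (∀ x ∈ M, ∀ y ∈ M, sform x y = 0) ∧ Module.finrank (ZMod d) M = n

/-- `ω = e^{2πi/d}`. -/
def omegaC (d : ℕ) : ℂ := Complex.exp (2 * Real.pi * Complex.I / d)

/-- `τ = (-1)^d e^{πi/d}`. -/
def tauC (d : ℕ) : ℂ := (-1) ^ d * Complex.exp (Real.pi * Complex.I / d)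

/-- The `n`-qudit Weyl operator `w(p,q) = w(p₁,q₁) ⊗ ⋯ ⊗ w(pₙ,qₙ)` on `(ℂ^d)^{⊗n}`,
written out in matrix entries: `w(p,q)_{x,y} = τ^{-Σᵢ pᵢqᵢ} ω^{p·x} δ_{x,y+q}`
(the exponent of `τ` being computed in the integers from representatives). -/
def weylN (d n : ℕ) (v : PhaseSpace d n) :
    Matrix (Fin n → ZMod d) (Fin n → ZMod d) ℂ := fun x y =>
  (tauC d ^ (-((∑ i, (v.1 i).val * (v.2 i).val : ℕ) : ℤ)))
    * omegaC d ^ ((∑ i, v.1 i * x i : ZMod d)).val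
    * (if x = y + v.2 then 1 else 0)

/-- The basis-dependent Weyl operators: given a basis `B = {u_i}` of a subspace
`M` and `m = Σ mᵢ uᵢ ∈ M`, set `w_B(m) = Πᵢ w(uᵢ)^{mᵢ}`. This turns `m ↦ w_B(m)`
into a true (non-projective) representation of `M` when `M` is isotropic. -/
def weylB {d n : ℕ} [NeZero d] {M : Submodule (ZMod d) (PhaseSpace d n)}
    {ι : Type*} [Fintype ι] (b : Module.Basis ι (ZMod d) M) (m : M) :
    Matrix (Fin n → ZMod d) (Fin n → ZMod d) ℂ :=
  ((Finset.univ : Finset ι).toList.map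
    (fun i => weylN d n ((b i : PhaseSpace d n)) ^ ((b.repr m) i).val)).prod

/-- The stabilizer-state operator `ρ_{M,v} = d^{-n} Σ_{m∈M} ω^{[v,m]} w_B(m)`. -/
def stabRho {d n : ℕ} [NeZero d] {M : Submodule (ZMod d) (PhaseSpace d n)}
    {ι : Type*} [Fintype ι] (b : Module.Basis ι (ZMod d) M) (v : PhaseSpace d n) :
    Matrix (Fin n → ZMod d) (Fin n → ZMod d) ℂ :=
  ((d : ℂ) ^ n)⁻¹ • ∑ᶠ m : M, omegaC d ^ (sform v (m : PhaseSpace d n)).val • weylB b m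

set_option linter.unusedSectionVars false


namespace StabAux
variable {d : ℕ} [NeZero d]

lemma omegaC_pow_d : omegaC d ^ d = 1 := by
  have hd : (d : ℂ) ≠ 0 := Nat.cast_ne_zero.2 (NeZero.ne d)
  rw [omegaC, ← Complex.exp_nat_mul]
  rw [show (d : ℂ) * (2 * Real.pi * Complex.I / d) = 2 * Real.pi * Complex.I by
    field_simp]
  exact Complex.exp_two_pi_mul_I

lemma tauC_sq : tauC d ^ 2 = omegaC d := by
  rw [tauC, omegaC, mul_pow, ← pow_mul, ← Complex.exp_nat_mul]
  rw [show d * 2 = 2 * d by ring, pow_mul]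
  norm_num
  ring_nf

lemma tauC_ne_zero : tauC d ≠ 0 := by
  rw [tauC]
  exact mul_ne_zero (pow_ne_zero _ (by norm_num)) (Complex.exp_ne_zero _)

lemma omegaC_ne_zero : omegaC d ≠ 0 := Complex.exp_ne_zero _

lemma tauC_pow_d : tauC d ^ d = (-1 : ℂ) ^ (d + 1) := by
  have hd : (d : ℂ) ≠ 0 := Nat.cast_ne_zero.2 (NeZero.ne d)
  rw [tauC, mul_pow, ← pow_mul, ← Complex.exp_nat_mul]
  rw [show (d : ℂ) * (Real.pi * Complex.I / d) = Real.pi * Complex.I by field_simp]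
  rw [Complex.exp_pi_mul_I, pow_add, pow_one]
  congr 1
  rcases Nat.even_or_odd d with h | h
  · rw [(h.mul_right d).neg_one_pow, h.neg_one_pow]
  · rw [(h.mul h).neg_one_pow, h.neg_one_pow]

/-- the character `χ(z) = ω^{z.val}` -/
def chi (d : ℕ) (z : ZMod d) : ℂ := omegaC d ^ z.val

lemma chi_natCast (k : ℕ) : chi d (k : ZMod d) = omegaC d ^ k := by
  rw [chi, ZMod.val_natCast]
  conv_rhs => rw [← Nat.div_add_mod k d]
  rw [pow_add, pow_mul, omegaC_pow_d, one_pow, one_mul]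

lemma chi_add (a b : ZMod d) : chi d (a + b) = chi d a * chi d b := by
  have := chi_natCast (d := d) (a.val + b.val)
  rw [Nat.cast_add, ZMod.natCast_val, ZMod.natCast_val, ZMod.cast_id, ZMod.cast_id] at this
  rw [this, pow_add, chi, chi]

lemma chi_zero : chi d 0 = 1 := by simp [chi]

lemma chi_ne_zero (z : ZMod d) : chi d z ≠ 0 := pow_ne_zero _ omegaC_ne_zero

lemma chi_neg (a : ZMod d) : chi d (-a) = (chi d a)⁻¹ := by
  have h : chi d (-a) * chi d a = 1 := by rw [← chi_add, neg_add_cancel, chi_zero]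
  exact eq_inv_of_mul_eq_one_left h

lemma chi_sub (a b : ZMod d) : chi d (a - b) = chi d a * (chi d b)⁻¹ := by
  rw [sub_eq_add_neg, chi_add, chi_neg]

lemma chi_sum {α : Type*} (s : Finset α) (f : α → ZMod d) :
    chi d (∑ i ∈ s, f i) = ∏ i ∈ s, chi d (f i) := by
  classical
  induction s using Finset.induction_on with
  | empty => simp [chi_zero]
  | insert a s h ih => rw [Finset.sum_insert h, Finset.prod_insert h, chi_add, ih]

lemma isPrimitiveRoot_omegaC : IsPrimitiveRoot (omegaC d) d :=
  Complex.isPrimitiveRoot_exp d (NeZero.ne d)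

lemma chi_eq_one_iff {z : ZMod d} : chi d z = 1 ↔ z = 0 := by
  constructor
  · intro h
    have hdvd := (IsPrimitiveRoot.pow_eq_one_iff_dvd isPrimitiveRoot_omegaC z.val).1 h
    have hlt := ZMod.val_lt z
    exact (ZMod.val_eq_zero z).1 (Nat.eq_zero_of_dvd_of_lt hdvd hlt)
  · rintro rfl; exact chi_zero


variable {n : ℕ}

/-- integer exponent data -/
def sN (v : PhaseSpace d n) : ℕ := ∑ i, (v.1 i).val * (v.2 i).val

lemma weylN_apply (v : PhaseSpace d n) (x y : Fin n → ZMod d) :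
    weylN d n v x y = tauC d ^ (-(sN v : ℤ)) * chi d (∑ i, v.1 i * x i)
      * (if x = y + v.2 then 1 else 0) := rfl

lemma weylN_zero : weylN d n 0 = 1 := by
  ext x y
  simp [weylN_apply, sN, chi_zero, Matrix.one_apply]

lemma weylN_mul (u v : PhaseSpace d n) :
    weylN d n u * weylN d n v
      = (chi d (-(∑ i, v.1 i * u.2 i)) * tauC d ^ ((sN (u+v) : ℤ) - sN u - sN v))
          • weylN d n (u + v) := by
  ext x y
  rw [Matrix.mul_apply]
  rw [Finset.sum_eq_single (x - u.2)]
  · rw [weylN_apply, weylN_apply, Matrix.smul_apply, weylN_apply]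
    rw [if_pos (by abel)]
    have hcond : (x - u.2 = y + v.2) ↔ (x = y + (u + v).2) := by
      constructor <;> intro h
      · have : x - u.2 + u.2 = y + v.2 + u.2 := by rw [h]
        simpa [add_comm, add_assoc, add_left_comm, sub_add_cancel] using this
      · show x - u.2 = y + v.2
        rw [h]; show y + (u.2 + v.2) - u.2 = y + v.2; abel
    by_cases h : x - u.2 = y + v.2
    · rw [if_pos h, if_pos (hcond.1 h)]
      have hsum : (∑ i, v.1 i * (x - u.2) i) = (∑ i, v.1 i * x i) - ∑ i, v.1 i * u.2 i := by
        rw [← Finset.sum_sub_distrib]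
        refine Finset.sum_congr rfl fun i _ => by
          show v.1 i * (x i - u.2 i) = _
          ring
      rw [hsum]
      have hsum2 : (∑ i, (u + v).1 i * x i) = (∑ i, u.1 i * x i) + ∑ i, v.1 i * x i := by
        rw [← Finset.sum_add_distrib]
        refine Finset.sum_congr rfl fun i _ => by
          show (u.1 i + v.1 i) * x i = _
          ring
      rw [hsum2, sub_eq_add_neg, chi_add, chi_add, smul_eq_mul]
      have htau : tauC d ^ (-(sN u : ℤ)) * tauC d ^ (-(sN v : ℤ))
          = tauC d ^ ((sN (u+v) : ℤ) - sN u - sN v) * tauC d ^ (-(sN (u+v) : ℤ)) := by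
        rw [← zpow_add₀ tauC_ne_zero, ← zpow_add₀ tauC_ne_zero]
        ring_nf
      linear_combination (chi d (∑ i, u.1 i * x i) * chi d (∑ i, v.1 i * x i)
        * chi d (-∑ i, v.1 i * u.2 i)) * htau
    · rw [if_neg h, if_neg (fun hh => h (hcond.2 hh))]
      simp
  · intro z _ hz
    rw [weylN_apply]
    rw [if_neg (fun hh => hz (by rw [hh]; abel))]
    ring
  · intro h
    exact absurd (Finset.mem_univ _) h

lemma weylN_commute {u v : PhaseSpace d n} (h : sform u v = 0) :
    weylN d n u * weylN d n v = weylN d n v * weylN d n u := by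
  have h1 : (∑ i, v.1 i * u.2 i) = ∑ i, u.1 i * v.2 i := by
    rw [sform, Finset.sum_sub_distrib, sub_eq_zero] at h
    rw [h]
    exact Finset.sum_congr rfl fun i _ => mul_comm _ _
  rw [weylN_mul, weylN_mul, add_comm v u, h1,
    show ((sN (u+v) : ℤ) - sN u - sN v) = ((sN (u+v) : ℤ) - sN v - sN u) by ring]

lemma weylN_pow (u : PhaseSpace d n) (k : ℕ) :
    weylN d n u ^ k
      = ((∏ j ∈ Finset.range k, chi d (-((j : ZMod d) * ∑ i, u.1 i * u.2 i)))
          * tauC d ^ ((sN (k • u) : ℤ) - k * sN u)) • weylN d n (k • u) := by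
  induction k with
  | zero =>
    simp only [pow_zero, Finset.range_zero, Finset.prod_empty, one_mul, zero_smul,
      Nat.cast_zero, zero_mul]
    rw [weylN_zero, show sN (0 : PhaseSpace d n) = 0 by simp [sN], Nat.cast_zero]
    norm_num
  | succ k ih =>
    rw [pow_succ, ih, Matrix.smul_mul, weylN_mul, smul_smul, ← succ_nsmul]
    congr 1
    have hQ : (∑ i, u.1 i * (k • u).2 i) = (k : ZMod d) * ∑ i, u.1 i * u.2 i := by
      rw [Finset.mul_sum]
      refine Finset.sum_congr rfl fun i _ => ?_
      show u.1 i * (k • u.2) i = _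
      show u.1 i * (k • (u.2 i)) = _
      rw [nsmul_eq_mul]; ring
    rw [hQ, Finset.prod_range_succ]
    have htau : tauC d ^ ((sN (k • u) : ℤ) - k * sN u)
          * tauC d ^ ((sN ((k+1) • u) : ℤ) - sN (k • u) - sN u)
        = tauC d ^ ((sN ((k+1) • u) : ℤ) - (k+1 : ℕ) * sN u) := by
      rw [← zpow_add₀ tauC_ne_zero]
      congr 1
      push_cast
      ring
    linear_combination ((∏ j ∈ Finset.range k, chi d (-((j : ZMod d) * ∑ i, u.1 i * u.2 i)))
      * chi d (-((k : ZMod d) * ∑ i, u.1 i * u.2 i))) * htau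

lemma sN_cast (u : PhaseSpace d n) : ((sN u : ℕ) : ZMod d) = ∑ i, u.1 i * u.2 i := by
  rw [sN, Nat.cast_sum]
  refine Finset.sum_congr rfl fun i _ => ?_
  rw [Nat.cast_mul, ZMod.natCast_val, ZMod.natCast_val, ZMod.cast_id, ZMod.cast_id]

lemma weylN_pow_d (hd : d.Prime) (u : PhaseSpace d n) : weylN d n u ^ d = 1 := by
  have h0 : d • u = (0 : PhaseSpace d n) := by
    rw [← Nat.cast_smul_eq_nsmul (ZMod d), ZMod.natCast_self, zero_smul]
  rw [weylN_pow, h0, weylN_zero, show sN (0 : PhaseSpace d n) = 0 by simp [sN]]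
  have htau0 : ∀ s : ℕ, tauC d ^ (((0:ℕ):ℤ) - (d:ℤ) * (s:ℤ)) = (((-1:ℂ)^(d+1))^s)⁻¹ := by
    intro s
    rw [show (((0:ℕ):ℤ) - (d:ℤ)*(s:ℤ)) = -((d*s : ℕ) : ℤ) by push_cast; ring,
      zpow_neg, zpow_natCast, pow_mul, tauC_pow_d]
  have hprod : (∏ j ∈ Finset.range d, chi d (-((j : ZMod d) * ∑ i, u.1 i * u.2 i)))
      = chi d (-(((d * (d-1)/2 : ℕ) : ZMod d) * ∑ i, u.1 i * u.2 i)) := by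
    rw [← chi_sum]
    congr 1
    rw [Finset.sum_neg_distrib, ← Finset.sum_mul]
    congr 2
    rw [← Nat.cast_sum, Finset.sum_range_id]
  rw [hprod]
  rcases hd.eq_two_or_odd' with rfl | hodd
  · -- d = 2
    have homega2 : omegaC 2 = -1 := by
      rw [omegaC, show ((2:ℕ):ℂ) = 2 by norm_num]
      rw [show (2 * (Real.pi:ℂ) * Complex.I / 2) = Real.pi * Complex.I by ring]
      exact Complex.exp_pi_mul_I
    have hQ : ((2 * (2-1)/2 : ℕ) : ZMod 2) = 1 := by norm_num
    rw [hQ, one_mul, htau0, ← sN_cast, CharTwo.neg_eq, chi_natCast, homega2]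
    rw [show ((-1:ℂ)^(2+1)) = -1 by norm_num]
    rw [mul_inv_cancel₀ (pow_ne_zero _ (by norm_num : (-1:ℂ) ≠ 0)), one_smul]
  · -- d odd
    have hdvd : (d : ℕ) ∣ d * (d - 1) / 2 := by
      obtain ⟨k, hk⟩ := hodd
      refine ⟨k, ?_⟩
      rw [show d - 1 = 2*k by omega, show d*(2*k) = 2*(d*k) by ring,
        Nat.mul_div_cancel_left _ (by norm_num)]
    rw [(ZMod.natCast_eq_zero_iff _ _).2 hdvd, zero_mul, neg_zero, chi_zero, one_mul]
    rw [htau0, Even.neg_one_pow (by simpa using hodd.add_one), one_pow, inv_one, one_smul]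

lemma sum_chi_eq_zero {G : Type*} [AddCommGroup G] [Fintype G] (f : G → ZMod d)
    (hf : ∀ a b, f (a + b) = f a + f b) (g₀ : G) (hg : f g₀ ≠ 0) :
    ∑ g : G, chi d (f g) = 0 := by
  have h1 : ∑ g : G, chi d (f (g + g₀)) = ∑ g : G, chi d (f g) :=
    Fintype.sum_equiv (Equiv.addRight g₀) _ _ fun g => rfl
  simp only [hf, chi_add] at h1
  rw [← Finset.sum_mul] at h1
  have hc : chi d (f g₀) ≠ 1 := fun h => hg (chi_eq_one_iff.1 h)
  have h2 : (∑ g : G, chi d (f g)) * (chi d (f g₀) - 1) = 0 := by linear_combination h1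
  rcases mul_eq_zero.1 h2 with h | h
  · exact h
  · exact absurd (sub_eq_zero.1 h) hc

lemma trace_weylN {v : PhaseSpace d n} (hv : v ≠ 0) : (weylN d n v).trace = 0 := by
  rw [Matrix.trace]
  by_cases h2 : v.2 = 0
  · have h1 : v.1 ≠ 0 := by
      intro h1
      exact hv (Prod.ext h1 h2)
    obtain ⟨i₀, hi₀⟩ := Function.ne_iff.1 h1
    have hdiag : ∀ x, (weylN d n v).diag x
        = tauC d ^ (-(sN v : ℤ)) * chi d (∑ i, v.1 i * x i) := by
      intro x
      rw [Matrix.diag_apply, weylN_apply, h2, add_zero, if_pos rfl, mul_one]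
    simp only [hdiag]
    rw [← Finset.mul_sum]
    have hS : ∑ x : Fin n → ZMod d, chi d (∑ i, v.1 i * x i) = 0 := by
      refine sum_chi_eq_zero _ (fun a b => ?_) (Pi.single i₀ 1) ?_
      · rw [← Finset.sum_add_distrib]
        exact Finset.sum_congr rfl fun i _ => by rw [Pi.add_apply]; ring
      · rw [Finset.sum_eq_single i₀]
        · rw [Pi.single_eq_same, mul_one]
          simpa using hi₀
        · intro i _ hi
          rw [Pi.single_eq_of_ne hi, mul_zero]
        · intro h; exact absurd (Finset.mem_univ _) h
    rw [hS, mul_zero]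
  · apply Finset.sum_eq_zero
    intro x _
    rw [Matrix.diag_apply, weylN_apply, if_neg, mul_zero]
    intro h
    exact h2 (left_eq_add.1 h)

section lists
variable {R : Type*} [Monoid R] {ι : Type*} (f : ι → R)

lemma list_prod_pow_mul (hcomm : ∀ i j, Commute (f i) (f j)) (l : List ι) (e e' : ι → ℕ) :
    (l.map fun i => f i ^ e i).prod * (l.map fun i => f i ^ e' i).prod
      = (l.map fun i => f i ^ (e i + e' i)).prod := by
  induction l with
  | nil => simp
  | cons a t ih =>
    simp only [List.map_cons, List.prod_cons]
    have hcm : Commute (f a ^ e' a) ((t.map fun i => f i ^ e i).prod) := by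
      refine Commute.list_prod_right _ _ fun x hx => ?_
      obtain ⟨i, _, rfl⟩ := List.mem_map.1 hx
      exact (hcomm a i).pow_pow _ _
    calc (f a ^ e a * (t.map fun i => f i ^ e i).prod)
          * (f a ^ e' a * (t.map fun i => f i ^ e' i).prod)
        = f a ^ e a * (((t.map fun i => f i ^ e i).prod * f a ^ e' a)
            * (t.map fun i => f i ^ e' i).prod) := by simp only [mul_assoc]
      _ = f a ^ e a * ((f a ^ e' a * (t.map fun i => f i ^ e i).prod)
            * (t.map fun i => f i ^ e' i).prod) := by rw [hcm.symm.eq]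
      _ = (f a ^ e a * f a ^ e' a)
            * ((t.map fun i => f i ^ e i).prod * (t.map fun i => f i ^ e' i).prod) := by
          simp only [mul_assoc]
      _ = f a ^ (e a + e' a) * (t.map fun i => f i ^ (e i + e' i)).prod := by
          rw [← pow_add, ih]

lemma list_prod_pow_mod {d : ℕ} (hone : ∀ i, f i ^ d = 1) (l : List ι) (e : ι → ℕ) :
    (l.map fun i => f i ^ e i).prod = (l.map fun i => f i ^ (e i % d)).prod := by
  congr 1
  refine List.map_congr_left fun i _ => ?_
  exact pow_eq_pow_mod _ (hone i)

end lists

section weylBlemmas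

variable {M : Submodule (ZMod d) (PhaseSpace d n)} {κ : Type*} [Fintype κ]

lemma weylB_hcomm (hMiso : ∀ x ∈ M, ∀ y ∈ M, sform x y = 0) (b : Module.Basis κ (ZMod d) M)
    (i j : κ) : Commute (weylN d n ((b i : PhaseSpace d n))) (weylN d n ((b j : PhaseSpace d n))) :=
  weylN_commute (hMiso _ (b i).2 _ (b j).2)

lemma weylB_zero (b : Module.Basis κ (ZMod d) M) : weylB b 0 = 1 := by
  unfold weylB
  simp only [map_zero, Finsupp.coe_zero, Pi.zero_apply, ZMod.val_zero, pow_zero]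
  simp

lemma weylB_add (hdp : d.Prime) (hMiso : ∀ x ∈ M, ∀ y ∈ M, sform x y = 0)
    (b : Module.Basis κ (ZMod d) M) (m m' : M) :
    weylB b (m + m') = weylB b m * weylB b m' := by
  unfold weylB
  rw [list_prod_pow_mul _ (weylB_hcomm hMiso b)]
  rw [list_prod_pow_mod (fun i => weylN d n ((b i : PhaseSpace d n)))
    (fun i => weylN_pow_d hdp _) _ (fun i => (b.repr m i).val + (b.repr m' i).val)]
  congr 1
  refine List.map_congr_left fun i _ => ?_
  rw [map_add, Finsupp.add_apply, ZMod.val_add]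

lemma exists_smul_weylN_list (g : κ → PhaseSpace d n) (e : κ → ℕ) (l : List κ) :
    ∃ c : ℂ, (l.map fun i => weylN d n (g i) ^ e i).prod
      = c • weylN d n ((l.map fun i => e i • g i).sum) := by
  induction l with
  | nil => exact ⟨1, by simp [weylN_zero]⟩
  | cons a t ih =>
    obtain ⟨c, hc⟩ := ih
    obtain ⟨c2, hc2⟩ : ∃ c2, weylN d n (g a) ^ e a = c2 • weylN d n (e a • g a) :=
      ⟨_, weylN_pow _ _⟩
    refine ⟨c2 * (c * (chi d (-(∑ i, ((List.map (fun i => e i • g i) t).sum).1 i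
        * (e a • g a).2 i))
      * tauC d ^ ((sN (e a • g a + (List.map (fun i => e i • g i) t).sum) : ℤ)
        - sN (e a • g a) - sN ((List.map (fun i => e i • g i) t).sum)))), ?_⟩
    rw [List.map_cons, List.prod_cons, List.map_cons, List.sum_cons, hc, hc2,
      Matrix.smul_mul, Matrix.mul_smul, weylN_mul, smul_smul, smul_smul, mul_assoc]

lemma weylB_eq_smul_weylN (b : Module.Basis κ (ZMod d) M) (m : M) :
    ∃ c : ℂ, weylB b m = c • weylN d n (m : PhaseSpace d n) := by
  obtain ⟨c, hc⟩ := exists_smul_weylN_list (fun i => ((b i : PhaseSpace d n)))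
    (fun i => (b.repr m i).val) (Finset.univ : Finset κ).toList
  have hl : ((Finset.univ : Finset κ).toList.map
      fun i => (b.repr m i).val • ((b i : PhaseSpace d n))).sum = (m : PhaseSpace d n) := by
    rw [Finset.sum_map_toList]
    conv_rhs => rw [← b.sum_repr m]
    rw [Submodule.coe_sum]
    refine Finset.sum_congr rfl fun i _ => ?_
    rw [Submodule.coe_smul, ← Nat.cast_smul_eq_nsmul (ZMod d), ZMod.natCast_val, ZMod.cast_id]
  refine ⟨c, ?_⟩
  rw [weylB, hc, hl]

end weylBlemmas

lemma sform_add_right (v x y : PhaseSpace d n) :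
    sform v (x + y) = sform v x + sform v y := by
  rw [sform, sform, sform, ← Finset.sum_add_distrib]
  refine Finset.sum_congr rfl fun i _ => ?_
  show v.1 i * (x.2 i + y.2 i) - v.2 i * (x.1 i + y.1 i) = _
  ring

lemma sform_neg_right (v x : PhaseSpace d n) : sform v (-x) = -sform v x := by
  rw [sform, sform, ← Finset.sum_neg_distrib]
  refine Finset.sum_congr rfl fun i _ => ?_
  show v.1 i * (-(x.2 i)) - v.2 i * (-(x.1 i)) = _
  ring

lemma card_fun_complex : ((Fintype.card (Fin n → ZMod d) : ℕ) : ℂ) = (d : ℂ)^n := by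
  simp [Fintype.card_pi, ZMod.card]

section traceB
variable {M N : Submodule (ZMod d) (PhaseSpace d n)}
  {κ₁ κ₂ : Type*} [Fintype κ₁] [Fintype κ₂]

lemma trace_weylB_mul (hdp : d.Prime)
    (hNiso : ∀ x ∈ N, ∀ y ∈ N, sform x y = 0)
    (bM : Module.Basis κ₁ (ZMod d) M) (bN : Module.Basis κ₂ (ZMod d) N)
    (hcomp : ∀ (x : M) (y : N), (x : PhaseSpace d n) = (y : PhaseSpace d n) →
      weylB bM x = weylB bN y)
    (m : M) (m' : N) :
    (weylB bM m * weylB bN m').trace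
      = if (m : PhaseSpace d n) = -((m' : PhaseSpace d n)) then ((d:ℂ)^n) else 0 := by
  by_cases h : (m : PhaseSpace d n) = -((m' : PhaseSpace d n))
  · rw [if_pos h]
    have hcoe : (m : PhaseSpace d n) = ((-m' : N) : PhaseSpace d n) := by
      rw [h]; simp
    rw [hcomp m (-m') hcoe, ← weylB_add hdp hNiso, neg_add_cancel, weylB_zero bN,
      Matrix.trace_one, card_fun_complex]
  · rw [if_neg h]
    obtain ⟨c, hc⟩ := weylB_eq_smul_weylN bM m
    obtain ⟨c', hc'⟩ := weylB_eq_smul_weylN bN m'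
    rw [hc, hc', Matrix.smul_mul, Matrix.mul_smul, weylN_mul, smul_smul, smul_smul,
      Matrix.trace_smul,
      trace_weylN (fun h0 => h (eq_neg_of_add_eq_zero_left h0)), smul_zero]

end traceB

end StabAux


open StabAux

/-- **Overlap of stabilizer states.** Let `M, N ⊆ ℤ_d^{2n}` be Lagrangian subspaces
with compatible bases (the basis-dependent Weyl operators of `M` and `N` agree on
`K = M ∩ N`), and let `ζ, ι` be coset representatives. Then
`|⟨M,ζ|N,ι⟩|² = tr(ρ_{M,ζ} ρ_{N,ι})` equals `d^{-n}|K|` if `[ζ,m] = [ι,m]` for all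
`m ∈ K`, and `0` otherwise. -/
theorem stab_overlap (d n : ℕ) (hd : d.Prime) [NeZero d]
    (M N : Submodule (ZMod d) (PhaseSpace d n))
    (hM : IsLagrangian M) (hN : IsLagrangian N)
    {ι₁ ι₂ : Type*} [Fintype ι₁] [Fintype ι₂]
    (bM : Module.Basis ι₁ (ZMod d) M) (bN : Module.Basis ι₂ (ZMod d) N)
    (hcomp : ∀ (x : M) (y : N), (x : PhaseSpace d n) = (y : PhaseSpace d n) →
      weylB bM x = weylB bN y)
    (ζ ι : PhaseSpace d n) :
    (stabRho bM ζ * stabRho bN ι).trace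
      = if ∀ m ∈ M ⊓ N, sform ζ m = sform ι m
        then ((d : ℂ) ^ n)⁻¹ * (Nat.card (M ⊓ N : Submodule (ZMod d) (PhaseSpace d n)) : ℂ)
        else 0 := by
  classical
  have hdn : ((d:ℂ))^n ≠ 0 := pow_ne_zero _ (Nat.cast_ne_zero.2 (NeZero.ne d))
  have hterm : ∀ (m : M) (m' : N),
      ((omegaC d ^ (sform ζ (m : PhaseSpace d n)).val • weylB bM m)
        * (omegaC d ^ (sform ι (m' : PhaseSpace d n)).val • weylB bN m')).trace
      = chi d (sform ζ (m : PhaseSpace d n)) * chi d (sform ι (m' : PhaseSpace d n))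
          * (if (m : PhaseSpace d n) = -((m' : PhaseSpace d n)) then ((d:ℂ)^n) else 0) := by
    intro m m'
    rw [Matrix.smul_mul, Matrix.mul_smul, smul_smul, Matrix.trace_smul, smul_eq_mul,
      trace_weylB_mul hd hN.1 bM bN hcomp m m']
    rfl
  have key : (stabRho bM ζ * stabRho bN ι).trace
      = (((d:ℂ)^n)⁻¹ * ((d:ℂ)^n)⁻¹) * ∑ m : M, ∑ m' : N,
          (chi d (sform ζ (m : PhaseSpace d n)) * chi d (sform ι (m' : PhaseSpace d n))
            * (if (m : PhaseSpace d n) = -((m' : PhaseSpace d n)) then ((d:ℂ)^n) else 0)) := by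
    rw [stabRho, stabRho, finsum_eq_sum_of_fintype, finsum_eq_sum_of_fintype,
      Matrix.smul_mul, Matrix.mul_smul, smul_smul, Finset.sum_mul_sum,
      Matrix.trace_smul, smul_eq_mul]
    congr 1
    rw [Matrix.trace_sum]
    refine Finset.sum_congr rfl fun m _ => ?_
    rw [Matrix.trace_sum]
    exact Finset.sum_congr rfl fun m' _ => hterm m m'
  have hinner : ∀ m : M, (∑ m' : N, chi d (sform ζ (m : PhaseSpace d n))
        * chi d (sform ι (m' : PhaseSpace d n))
        * (if (m : PhaseSpace d n) = -((m' : PhaseSpace d n)) then ((d:ℂ)^n) else 0))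
      = (if (m : PhaseSpace d n) ∈ N
          then chi d (sform ζ (m : PhaseSpace d n) - sform ι (m : PhaseSpace d n)) * ((d:ℂ)^n)
          else 0) := by
    intro m
    by_cases hmN : (m : PhaseSpace d n) ∈ N
    · rw [if_pos hmN]
      rw [Finset.sum_eq_single (⟨-(m : PhaseSpace d n), neg_mem hmN⟩ : N)
        (fun m'' _ hne => by
          rw [if_neg fun habs => hne (Subtype.ext (by rw [← neg_eq_iff_eq_neg.2 habs])),
            mul_zero])
        (fun habs => absurd (Finset.mem_univ _) habs)]
      rw [show ((⟨-(m : PhaseSpace d n), neg_mem hmN⟩ : N) : PhaseSpace d n)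
          = -(m : PhaseSpace d n) from rfl]
      rw [if_pos (neg_neg _).symm, sform_neg_right, chi_neg, chi_sub]
    · rw [if_neg hmN]
      refine Finset.sum_eq_zero fun m'' _ => ?_
      rw [if_neg fun habs => hmN (by rw [habs]; exact neg_mem m''.2), mul_zero]
  have hsum1 : (∑ m : M, ∑ m' : N,
        (chi d (sform ζ (m : PhaseSpace d n)) * chi d (sform ι (m' : PhaseSpace d n))
          * (if (m : PhaseSpace d n) = -((m' : PhaseSpace d n)) then ((d:ℂ)^n) else 0)))
      = (∑ k : ↥(M ⊓ N), chi d (sform ζ (k : PhaseSpace d n) - sform ι (k : PhaseSpace d n)))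
          * ((d:ℂ)^n) := by
    rw [Finset.sum_congr rfl fun m _ => hinner m, Finset.sum_mul, ← Finset.sum_filter]
    refine Finset.sum_bij'
      (fun (m : M) hm => (⟨(m : PhaseSpace d n),
        ⟨m.2, (Finset.mem_filter.1 hm).2⟩⟩ : ↥(M ⊓ N)))
      (fun k _ => (⟨(k : PhaseSpace d n), k.2.1⟩ : M)) ?_ ?_ ?_ ?_ ?_
    · intro a ha; exact Finset.mem_univ _
    · intro k hk
      refine Finset.mem_filter.2 ⟨Finset.mem_univ _, k.2.2⟩
    · intro a ha; rfl
    · intro k hk; rfl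
    · intro a ha; rfl
  rw [key, hsum1]
  by_cases hcond : ∀ m ∈ M ⊓ N, sform ζ m = sform ι m
  · rw [if_pos hcond]
    have hS : (∑ k : ↥(M ⊓ N), chi d (sform ζ (k : PhaseSpace d n)
          - sform ι (k : PhaseSpace d n)))
        = (Nat.card ↥(M ⊓ N) : ℂ) := by
      rw [Finset.sum_congr rfl fun k _ => by
        rw [sub_eq_zero.2 (hcond (k : PhaseSpace d n) k.2), chi_zero]]
      rw [Finset.sum_const, Finset.card_univ, nsmul_eq_mul, mul_one,
        Nat.card_eq_fintype_card]
    rw [hS]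
    field_simp
  · rw [if_neg hcond]
    push_neg at hcond
    obtain ⟨x, hxmem, hxne⟩ := hcond
    have hS : (∑ k : ↥(M ⊓ N), chi d (sform ζ (k : PhaseSpace d n)
          - sform ι (k : PhaseSpace d n))) = 0 := by
      refine sum_chi_eq_zero (fun k : ↥(M ⊓ N) =>
          sform ζ (k : PhaseSpace d n) - sform ι (k : PhaseSpace d n))
        (fun a b => ?_) ⟨x, hxmem⟩ (sub_ne_zero.2 hxne)
      simp only [Submodule.coe_add, sform_add_right]
      ring
    rw [hS, zero_mul, mul_zero]
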